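/- In the 2-class premium game, fix θ₂ ∈ Θ and define the smooth branch J̃¹ : [μ, θ₂] → ℝ by J̃¹(θ₁) := η̂(θ₁)·(θ₁(â + κ(1−â)) − m̂), where η̂(θ₁) := 1 − (1−k₂)e^{−k₁(θ₂−θ₁)}, b̂(θ₁) := δ(κ−1)(η̂(θ₁)θ₁ + (1−η̂(θ₁))θ₂), â := F_L(b̂(θ₁)) and m̂ := ∫_{b̂(θ₁)}^∞ ℓ f_L(ℓ)dℓ (this agrees with J¹(θ₁;θ₂) for θ₁ ≤ θ₂). Assume (i) −e·k₁/(2e−1) ≤ f_L′(ℓ)/f_L(ℓ) ≤ k₁/2 for all ℓ ∈ I_L, and (ii) (1−δ)·k₁·M/κ ≤ A₁. If θ₁ ∈ [μ, θ₂] satisfies (J̃¹)′(θ₁) = 0, then (J̃¹)″(θ₁) < 0. -/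

import Mathlib

noncomputable section

open MeasureTheory Set

/-- Cumulative distribution function of the loss: point mass `p₀` at zero plus density `fL`. -/
def lossCdf (p₀ : ℝ) (fL : ℝ → ℝ) (x : ℝ) : ℝ := p₀ + ∫ ℓ in (0:ℝ)..x, fL ℓ

/-- The exponential choice function `η`. -/
def expEta (k₁ k₂ t : ℝ) : ℝ :=
  if 0 ≤ t then 1 - (1 - k₂) * Real.exp (-(k₁ * t)) else k₂ * Real.exp (k₁ * t)

/-- Insureds' optimal reporting barrier `b*(θ₁,θ₂) = δ(κ−1)(η̄θ₁ + (1−η̄)θ₂)`. -/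
def repBarrier (δ κ k₁ k₂ θ₁ θ₂ : ℝ) : ℝ :=
  δ * (κ - 1) * (expEta k₁ k₂ (θ₂ - θ₁) * θ₁ + (1 - expEta k₁ k₂ (θ₂ - θ₁)) * θ₂)

/-- `a = F_L(b*(θ₁,θ₂))`: probability that the loss is hidden. -/
def aProb (p₀ : ℝ) (fL : ℝ → ℝ) (δ κ k₁ k₂ θ₁ θ₂ : ℝ) : ℝ :=
  lossCdf p₀ fL (repBarrier δ κ k₁ k₂ θ₁ θ₂)

/-- `m = ∫_{b*(θ₁,θ₂)}^∞ ℓ f_L(ℓ) dℓ`: expected reported loss. -/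
def mRep (fL : ℝ → ℝ) (δ κ k₁ k₂ θ₁ θ₂ : ℝ) : ℝ :=
  ∫ ℓ in Set.Ioi (repBarrier δ κ k₁ k₂ θ₁ θ₂), ℓ * fL ℓ

/-- Company 1's expected per-period profit `J¹(θ₁;θ₂)`. -/
def J1 (p₀ : ℝ) (fL : ℝ → ℝ) (δ κ k₁ k₂ θ₁ θ₂ : ℝ) : ℝ :=
  expEta k₁ k₂ (θ₂ - θ₁) *
    (θ₁ * (aProb p₀ fL δ κ k₁ k₂ θ₁ θ₂ + κ * (1 - aProb p₀ fL δ κ k₁ k₂ θ₁ θ₂))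
      - mRep fL δ κ k₁ k₂ θ₁ θ₂)

/-- Company 2's expected per-period profit `J²(θ₂;θ₁)`. -/
def J2 (p₀ : ℝ) (fL : ℝ → ℝ) (δ κ k₁ k₂ θ₂ θ₁ : ℝ) : ℝ :=
  (1 - expEta k₁ k₂ (θ₂ - θ₁)) *
    (θ₂ * (aProb p₀ fL δ κ k₁ k₂ θ₁ θ₂ + κ * (1 - aProb p₀ fL δ κ k₁ k₂ θ₁ θ₂))
      - mRep fL δ κ k₁ k₂ θ₁ θ₂)

/-- `A₁ = k₂(2−δk₂)/(2−k₂)`. -/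
def A1 (δ k₂ : ℝ) : ℝ := k₂ * (2 - δ * k₂) / (2 - k₂)

/-- `A₂ = (1−k₂)(2−δ(1−k₂))/(1+k₂)`. -/
def A2 (δ k₂ : ℝ) : ℝ := (1 - k₂) * (2 - δ * (1 - k₂)) / (1 + k₂)

/-- `m₁ = k₁/(δ(κ−1)²k₂·max(2A₁, 2δ−A₁))`. -/
def m1 (δ κ k₁ k₂ : ℝ) : ℝ :=
  k₁ / (δ * (κ - 1) ^ 2 * k₂ * max (2 * A1 δ k₂) (2 * δ - A1 δ k₂))

/-- `m₂ = k₁/(δ(κ−1)²(1−k₂)·max(2A₂, 2δ−A₂))`. -/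
def m2 (δ κ k₁ k₂ : ℝ) : ℝ :=
  k₁ / (δ * (κ - 1) ^ 2 * (1 - k₂) * max (2 * A2 δ k₂) (2 * δ - A2 δ k₂))

/-- The premium strategy set `Θ = [μ, M/κ]`. -/
def Theta (μ M κ : ℝ) : Set ℝ := Set.Icc μ (M / κ)

/-- The interval `I_L = [δ(κ−1)μ, δ(κ−1)M/κ]` of possible barriers. -/
def IL (δ κ μ M : ℝ) : Set ℝ := Set.Icc (δ * (κ - 1) * μ) (δ * (κ - 1) * (M / κ))


/-- The smooth branch of the choice function on `{θ₁ ≤ θ₂}`: `η̂(θ₁) = 1 − (1−k₂)e^{−k₁(θ₂−θ₁)}`. -/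
def etaLow (k₁ k₂ θ₂ θ₁ : ℝ) : ℝ := 1 - (1 - k₂) * Real.exp (-(k₁ * (θ₂ - θ₁)))

/-- The corresponding barrier `b̂(θ₁) = δ(κ−1)(η̂(θ₁)θ₁ + (1−η̂(θ₁))θ₂)`. -/
def bLow (δ κ k₁ k₂ θ₂ θ₁ : ℝ) : ℝ :=
  δ * (κ - 1) * (etaLow k₁ k₂ θ₂ θ₁ * θ₁ + (1 - etaLow k₁ k₂ θ₂ θ₁) * θ₂)

/-- The smooth branch `J̃¹(θ₁) = η̂(θ₁)·(θ₁(â + κ(1−â)) − m̂)` of Company 1's profit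
on `{θ₁ ≤ θ₂}`. -/
def JLow (p₀ : ℝ) (fL : ℝ → ℝ) (δ κ k₁ k₂ θ₂ θ₁ : ℝ) : ℝ :=
  etaLow k₁ k₂ θ₂ θ₁ *
    (θ₁ * (lossCdf p₀ fL (bLow δ κ k₁ k₂ θ₂ θ₁)
        + κ * (1 - lossCdf p₀ fL (bLow δ κ k₁ k₂ θ₂ θ₁)))
      - ∫ ℓ in Set.Ioi (bLow δ κ k₁ k₂ θ₂ θ₁), ℓ * fL ℓ)


/-! ### Auxiliary lemmas for the proof of `stmt_10` -/

/-- pure arithmetic core: the C2-type bound -/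
lemma ineq_C2 (s t c : ℝ) (ht : 0 ≤ t) (ht1 : t ≤ 37/100) (hs : t < s) (hs1 : s < 1 + t)
    (hc1 : c ≤ 1) : (s-t)*(c*s^2/2 + t - 2*(1-s+t)) ≤ (2-s+t)*s := by
  have hu : 0 < 1 - s + t := by linarith
  have hst : 0 < s := lt_of_le_of_lt ht hs
  nlinarith [mul_nonneg (sub_nonneg.2 hs.le) (sub_nonneg.2 hc1),
    mul_pos hu hst, mul_pos hu (sub_pos.2 hs),
    mul_nonneg ht (sub_nonneg.2 ht1), mul_nonneg ht (sub_nonneg.2 hs.le),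
    mul_pos hst (sub_pos.2 hs), sq_nonneg (s-t), sq_nonneg (1-s+t),
    mul_nonneg (mul_nonneg (sub_nonneg.2 hs.le) hst.le) hst.le,
    mul_nonneg (mul_nonneg ht hst.le) hst.le,
    mul_pos (mul_pos hu hst) hst, mul_pos (mul_pos hu hu) hst]

/-- pure arithmetic core: the C1-type (condition (ii)) bound -/
lemma ineq_C1 (k₂ d t s : ℝ) (hk : 0 < k₂) (hk1 : k₂ < 1) (hd : 0 < d) (hd1 : d < 1)
    (ht : 0 ≤ t) (ht1 : t ≤ (37/100) * (1 - k₂)) (hs : k₂ + t ≤ s) (hs1 : s ≤ 1 + t) :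
    k₂*(2-d*k₂)*(2+t) ≤ 2*((2-k₂)+k₂*(2-d*k₂))*s - d*((2-k₂)+(614/1000)*k₂*(2-d*k₂))*s^2 := by
  have L2 : k₂*(2-d*k₂)*(2+t) ≤ 2*((2-k₂)+k₂*(2-d*k₂))*(k₂+t) - d*((2-k₂)+(614/1000)*k₂*(2-d*k₂))*(k₂+t)^2 := by
    nlinarith [mul_nonneg ht (sub_nonneg.2 ht1), sq_nonneg (k₂+t), mul_pos hk hd,
      mul_nonneg (mul_nonneg ht hk.le) (sub_nonneg.2 hk1.le),
      mul_nonneg (mul_nonneg ht hd.le) (sub_nonneg.2 hk1.le),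
      mul_nonneg (mul_nonneg hk.le hk.le) (sub_nonneg.2 hd1.le),
      mul_nonneg (mul_nonneg hk.le hk.le) (mul_nonneg hd.le (sub_nonneg.2 hk1.le)),
      mul_nonneg ht (mul_nonneg hd.le hk.le), sq_nonneg t, sq_nonneg (1-k₂),
      mul_nonneg (mul_nonneg hd.le hk.le) ht,
      mul_nonneg (sub_nonneg.2 hd1.le) (sub_nonneg.2 hk1.le),
      mul_nonneg (mul_nonneg (sub_nonneg.2 hd1.le) hk.le) hk.le,
      mul_nonneg (mul_nonneg (mul_nonneg hd.le hk.le) hd.le) hk.le]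
  have bridge : 0 ≤ 2*((2-k₂)+k₂*(2-d*k₂)) - d*((2-k₂)+(614/1000)*k₂*(2-d*k₂))*(s+(k₂+t)) := by
    nlinarith [mul_pos hk hd, sq_nonneg (1-k₂), mul_nonneg (mul_nonneg hd.le hk.le) (sub_nonneg.2 hk1.le),
      mul_nonneg (sub_nonneg.2 hd1.le) hk.le, mul_nonneg (mul_nonneg (mul_nonneg hd.le hk.le) hd.le) hk.le,
      mul_nonneg (mul_nonneg hd.le hk.le) (mul_nonneg hd.le hk.le), mul_nonneg ht (sub_nonneg.2 hk1.le)]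
  nlinarith [mul_nonneg (sub_nonneg.2 hs) bridge]

/-- `x e^{-x} ≤ 0.37` for `x ≥ 0`. -/
lemma exp_neg_mul_le {x : ℝ} (hx : 0 ≤ x) : Real.exp (-x) * x ≤ 37/100 := by
  have h1 : x ≤ Real.exp x / Real.exp 1 := by
    have h0 := Real.add_one_le_exp (x - 1)
    have h2 : Real.exp (x-1) = Real.exp x / Real.exp 1 := Real.exp_sub x 1
    linarith [h2 ▸ h0]
  have hepos := Real.exp_pos 1
  have h3 : Real.exp (-x) * x ≤ Real.exp (-x) * (Real.exp x / Real.exp 1) :=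
    mul_le_mul_of_nonneg_left h1 (Real.exp_pos (-x)).le
  have h4 : Real.exp (-x) * (Real.exp x / Real.exp 1) = 1 / Real.exp 1 := by
    rw [Real.exp_neg]; field_simp
  have h5 : (1:ℝ) / Real.exp 1 ≤ 37/100 := by
    rw [div_le_iff₀ hepos]
    nlinarith [Real.exp_one_gt_d9]
  linarith

set_option maxHeartbeats 2000000 in
/-- the central second-order arithmetic estimate -/
lemma key_ineq (δ κ k₁ k₂ θ₁ E D uv c B1 B2 f f' a m Q W P X : ℝ)
    (hδ : 0 < δ) (hδ1 : δ < 1) (hκ : 1 < κ) (hκ2 : κ < 2)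
    (hk₁ : 0 < k₁) (hk₂ : 0 < k₂) (hk₂1 : k₂ < 1) (hθ₁ : 0 < θ₁)
    (hE0 : 0 < E) (hE1 : E ≤ 1) (hD0 : 0 ≤ D) (hED : E * D ≤ 37/100)
    (hf : 0 < f) (hfp1 : f' ≤ k₁/2 * f) (hfp2 : -(614/1000*k₁*f) ≤ f')
    (ha : a ≤ 1) (hm : m < θ₁)
    (huv : uv = (1-k₂)*E) (hc : c = δ*(κ-1))
    (hB1 : B1 = c*((1-uv)+uv*D)) (hB2 : B2 = c*(k₁*uv*D - 2*(k₁*uv)))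
    (hQ : Q = a + κ*(1-a)) (hP : P = θ₁*Q - m)
    (hW : -((κ-1)*(1-δ)*θ₁) ≤ W)
    (hA1 : (1-δ)*k₁*θ₁*(2-k₂) ≤ k₂*(2-δ*k₂))
    (hstat : -(k₁*uv)*P + (1-uv)*(Q + f*B1*W) = 0)
    (hX : X = -(k₁^2*uv*P) - 2*(k₁*uv)*(Q + f*B1*W)
      + (1-uv)*(f*B1*(B1-2*(κ-1)) + W*(f'*B1^2 + f*B2))) :
    X < 0 := by
  have hk₂' : 0 < 1 - k₂ := by linarith only [hk₂1]
  have huv0 : 0 < uv := by rw [huv]; exact mul_pos hk₂' hE0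
  have huv1 : uv ≤ 1 - k₂ := by
    rw [huv]; exact mul_le_of_le_one_right hk₂'.le hE1
  have hη : 0 < 1 - uv := by linarith only [huv1, hk₂]
  have ht0 : 0 ≤ uv * D := mul_nonneg huv0.le hD0
  have ht1 : uv * D ≤ 37/100 * (1-k₂) := by
    rw [huv]
    calc (1-k₂)*E*D = (1-k₂)*(E*D) := by ring
    _ ≤ (1-k₂)*(37/100) := mul_le_mul_of_nonneg_left hED hk₂'.le
    _ = 37/100 * (1-k₂) := by ring
  have ht1' : uv * D ≤ 37/100 := by linarith only [ht1, hk₂]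
  have hκ1 : 0 < κ - 1 := by linarith only [hκ]
  have hc0 : 0 < c := by rw [hc]; exact mul_pos hδ hκ1
  have hc1 : c < 1 := by
    rw [hc]
    calc δ*(κ-1) < 1*1 := mul_lt_mul'' hδ1 (by linarith only [hκ2]) hδ.le hκ1.le
    _ = 1 := by ring
  have hcδ : c ≤ δ := by
    rw [hc]; exact mul_le_of_le_one_right hδ.le (by linarith only [hκ2])
  have hQ1 : 1 ≤ Q := by
    have h := mul_nonneg hκ1.le (sub_nonneg.2 ha)
    linarith only [h, hQ]
  have hP0 : 0 < P := by
    have h := mul_le_mul_of_nonneg_left hQ1 hθ₁.le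
    rw [mul_one] at h
    linarith only [h, hP, hm]
  subst hB1 hB2
  have hs0 : 0 < (1-uv)+uv*D := by linarith only [hη, ht0]
  have hsle : (1-uv)+uv*D ≤ 137/100 := by linarith only [huv0, ht1, hk₂]
  have hB1pos : 0 < c*((1-uv)+uv*D) := mul_pos hc0 hs0
  have hB1lt : c*((1-uv)+uv*D) < 2*(κ-1) := by
    have h1 : c*((1-uv)+uv*D) ≤ c*(137/100) := mul_le_mul_of_nonneg_left hsle hc0.le
    have h2 : c*(137/100) < 2*(κ-1) := by
      rw [hc]
      have h3 := mul_pos hκ1 (show (0:ℝ) < 2 - 137/100*δ by linarith only [hδ1])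
      linarith only [h3]
    linarith only [h1, h2]
  have hfB1W : (1-uv)*(f*(c*((1-uv)+uv*D))*W) = k₁*uv*P - (1-uv)*Q := by
    linear_combination hstat
  have hXid : (1-uv)*X = -(k₁^2*uv*(1+uv)*P)
      + (1-uv)^2*(f*(c*((1-uv)+uv*D))*((c*((1-uv)+uv*D))-2*(κ-1)))
      + ((1-uv)*W)*((1-uv)*(f'*(c*((1-uv)+uv*D))^2 + f*(c*(k₁*uv*D - 2*(k₁*uv))))) := by
    linear_combination (1-uv)*hX - 2*k₁*uv*hstat
  clear hstat hX
  have hT4 : 0 < (1-uv)^2*(f*(c*((1-uv)+uv*D))*(2*(κ-1) - c*((1-uv)+uv*D))) :=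
    mul_pos (pow_pos hη 2)
      (mul_pos (mul_pos hf hB1pos) (by linarith only [hB1lt]))
  have hPterm : 0 < k₁^2*uv*(1+uv)*P :=
    mul_pos (mul_pos (mul_pos (pow_pos hk₁ 2) huv0) (by linarith only [huv0])) hP0
  have hconc : (1-uv)*X < 0 → X < 0 := by
    intro h
    by_contra hX0
    push_neg at hX0
    exact absurd h (not_lt.2 (mul_nonneg hη.le hX0))
  apply hconc
  rcases le_or_gt 0 W with hW0 | hW0
  · -- Case W ≥ 0 : use C2
    have c2 := ineq_C2 ((1-uv)+uv*D) (uv*D) c ht0 ht1'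
      (by linarith only [hη]) (by linarith only [huv0]) hc1.le
    have c2' := mul_le_mul_of_nonneg_left c2
      (mul_nonneg (mul_nonneg hk₁.le hf.le) hc0.le : (0:ℝ) ≤ k₁*f*c)
    have f1 := mul_le_mul_of_nonneg_right hfp1
      (mul_nonneg hη.le (sq_nonneg (c*((1-uv)+uv*D))) : (0:ℝ) ≤ (1-uv)*(c*((1-uv)+uv*D))^2)
    have hGle : (1-uv)*(f'*(c*((1-uv)+uv*D))^2 + f*(c*(k₁*uv*D - 2*(k₁*uv))))
        ≤ k₁*(1+uv)*(f*(c*((1-uv)+uv*D))) := by linarith only [c2', f1]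
    have hmul := mul_le_mul_of_nonneg_left hGle (mul_nonneg hη.le hW0)
    have e2 : k₁*(1+uv)*((1-uv)*(f*(c*((1-uv)+uv*D))*W))
        = k₁*(1+uv)*(k₁*uv*P - (1-uv)*Q) := by rw [hfB1W]
    have hQterm : 0 < k₁*(1+uv)*((1-uv)*Q) :=
      mul_pos (mul_pos hk₁ (by linarith only [huv0]))
        (mul_pos hη (by linarith only [hQ1]))
    linarith only [hXid, hmul, e2, hQterm, hT4]
  · -- Case W < 0
    rcases le_or_gt 0 ((1-uv)*(f'*(c*((1-uv)+uv*D))^2 + f*(c*(k₁*uv*D - 2*(k₁*uv))))) with hG0 | hG0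
    · have h3 : ((1-uv)*W) ≤ 0 := mul_nonpos_of_nonneg_of_nonpos hη.le hW0.le
      have h4 := mul_le_mul_of_nonneg_right h3 hG0
      rw [zero_mul] at h4
      linarith only [hXid, h4, hT4, hPterm]
    · -- G0 < 0 : use C1 and the premium-cap condition
      have h4a : (0:ℝ) ≤ -W := by linarith only [hW0]
      have h4b : -W ≤ (κ-1)*(1-δ)*θ₁ := by linarith only [hW]
      have f2 := mul_le_mul_of_nonneg_right
        (show -f' ≤ 614/1000*k₁*f by linarith only [hfp2])
        (mul_nonneg hη.le (sq_nonneg (c*((1-uv)+uv*D))) : (0:ℝ) ≤ (1-uv)*(c*((1-uv)+uv*D))^2)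
      have g1 : -((1-uv)*(f'*(c*((1-uv)+uv*D))^2 + f*(c*(k₁*uv*D - 2*(k₁*uv)))))
          ≤ (1-uv)*(k₁*f)*(614/1000*(c*((1-uv)+uv*D))^2 + c*(2*uv - uv*D)) := by
        linarith only [f2]
      have g0pos : (0:ℝ) ≤ -((1-uv)*(f'*(c*((1-uv)+uv*D))^2 + f*(c*(k₁*uv*D - 2*(k₁*uv))))) := by
        linarith only [hG0]
      have prodb := mul_le_mul h4b g1 g0pos
        (mul_nonneg (mul_nonneg hκ1.le (by linarith only [hδ1])) hθ₁.le)
      have hprod2 := mul_le_mul_of_nonneg_left prodb hη.le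
      have apos : 0 < (1-uv)*(k₁*f)*c := mul_pos (mul_pos hη (mul_pos hk₁ hf)) hc0
      have h0' : ((1-uv)*(k₁*f)*c) * 0 ≤ ((1-uv)*(k₁*f)*c) *
          (614/1000*c*((1-uv)+uv*D)^2 + (2*uv - uv*D)) := by
        linarith only [g1, hG0]
      have hZ0 : (0:ℝ) ≤ 614/1000*c*((1-uv)+uv*D)^2 + (2*uv - uv*D) :=
        by simpa using le_of_mul_le_mul_left h0' apos
      have c1 := ineq_C1 k₂ δ (uv*D) ((1-uv)+uv*D) hk₂ hk₂1 hδ hδ1 ht0 ht1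
        (by linarith only [huv1]) (by linarith only [huv0])
      have hδk₂ : δ*k₂ < 1 := by
        calc δ*k₂ < 1*1 := mul_lt_mul'' hδ1 hk₂1 hδ.le hk₂.le
        _ = 1 := by ring
      have hcd2 := mul_le_mul_of_nonneg_left
        (mul_le_mul_of_nonneg_right hcδ (sq_nonneg ((1-uv)+uv*D)))
        (mul_nonneg (by norm_num : (0:ℝ) ≤ 614/1000)
          (mul_nonneg hk₂.le (by linarith only [hδk₂])) :
          (0:ℝ) ≤ 614/1000*(k₂*(2-δ*k₂)))
      have hC1' : k₂*(2-δ*k₂)*(614/1000*c*((1-uv)+uv*D)^2 + (2*uv - uv*D))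
          ≤ (2-k₂)*(((1-uv)+uv*D)*(2-δ*((1-uv)+uv*D))) := by
        linarith only [c1, hcd2]
      have hA1Z := mul_le_mul_of_nonneg_right hA1 hZ0
      have hfin2 : (1-δ)*k₁*θ₁*(614/1000*c*((1-uv)+uv*D)^2 + (2*uv - uv*D))
          ≤ ((1-uv)+uv*D)*(2-δ*((1-uv)+uv*D)) := by
        have h2k : (0:ℝ) < 2-k₂ := by linarith only [hk₂1]
        have h5 : (2-k₂) * ((1-δ)*k₁*θ₁*(614/1000*c*((1-uv)+uv*D)^2 + (2*uv - uv*D)))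
            ≤ (2-k₂) * (((1-uv)+uv*D)*(2-δ*((1-uv)+uv*D))) := by
          linarith only [hA1Z, hC1']
        exact le_of_mul_le_mul_left h5 h2k
      have hfin3 := mul_le_mul_of_nonneg_left hfin2
        (mul_nonneg (sq_nonneg (1-uv)) (mul_nonneg (mul_nonneg hκ1.le hf.le) hc0.le) :
          (0:ℝ) ≤ (1-uv)^2*((κ-1)*f*c))
      have glue : (1-uv)^2*((κ-1)*f*c)*(((1-uv)+uv*D)*(2-δ*((1-uv)+uv*D)))
          = (1-uv)^2*(f*(c*((1-uv)+uv*D))*(2*(κ-1) - c*((1-uv)+uv*D))) := by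
        rw [hc]; ring
      linarith only [hXid, hprod2, hfin3, glue, hT4, hPterm]

/-- the function `u(θ) = (1-k₂)e^{-k₁(θ₂-θ)}`. -/
def ufn (k₁ k₂ θ₂ : ℝ) : ℝ → ℝ := fun θ => (1 - k₂) * Real.exp (-(k₁ * (θ₂ - θ)))
/-- first derivative of `bLow`. -/
def b1fn (δ κ k₁ k₂ θ₂ : ℝ) : ℝ → ℝ := fun θ =>
  δ*(κ-1)*((1 - ufn k₁ k₂ θ₂ θ) + k₁ * ufn k₁ k₂ θ₂ θ * (θ₂ - θ))
/-- second derivative of `bLow`. -/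
def b2fn (δ κ k₁ k₂ θ₂ : ℝ) : ℝ → ℝ := fun θ =>
  δ*(κ-1)*(k₁ * ufn k₁ k₂ θ₂ θ * (k₁*(θ₂ - θ)) - 2*(k₁ * ufn k₁ k₂ θ₂ θ))
/-- first derivative of `JLow`. -/
def J1fn (p₀ : ℝ) (fL : ℝ → ℝ) (δ κ k₁ k₂ θ₂ : ℝ) : ℝ → ℝ := fun θ =>
  -(k₁ * ufn k₁ k₂ θ₂ θ) * (θ * (lossCdf p₀ fL (bLow δ κ k₁ k₂ θ₂ θ)
      + κ * (1 - lossCdf p₀ fL (bLow δ κ k₁ k₂ θ₂ θ)))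
      - ∫ ℓ in Set.Ioi (bLow δ κ k₁ k₂ θ₂ θ), ℓ * fL ℓ)
  + (1 - ufn k₁ k₂ θ₂ θ) * ((lossCdf p₀ fL (bLow δ κ k₁ k₂ θ₂ θ)
      + κ * (1 - lossCdf p₀ fL (bLow δ κ k₁ k₂ θ₂ θ)))
      + θ * ((1-κ) * (fL (bLow δ κ k₁ k₂ θ₂ θ) * b1fn δ κ k₁ k₂ θ₂ θ))
      + bLow δ κ k₁ k₂ θ₂ θ * fL (bLow δ κ k₁ k₂ θ₂ θ) * b1fn δ κ k₁ k₂ θ₂ θ)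
/-- second derivative of `JLow`. -/
def J2fn (p₀ : ℝ) (fL fL' : ℝ → ℝ) (δ κ k₁ k₂ θ₂ : ℝ) (θ : ℝ) : ℝ :=
  -(k₁^2 * ufn k₁ k₂ θ₂ θ * (θ * (lossCdf p₀ fL (bLow δ κ k₁ k₂ θ₂ θ)
        + κ * (1 - lossCdf p₀ fL (bLow δ κ k₁ k₂ θ₂ θ)))
      - ∫ ℓ in Set.Ioi (bLow δ κ k₁ k₂ θ₂ θ), ℓ * fL ℓ))
  - 2*(k₁ * ufn k₁ k₂ θ₂ θ) * ((lossCdf p₀ fL (bLow δ κ k₁ k₂ θ₂ θ)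
        + κ * (1 - lossCdf p₀ fL (bLow δ κ k₁ k₂ θ₂ θ)))
      + fL (bLow δ κ k₁ k₂ θ₂ θ) * b1fn δ κ k₁ k₂ θ₂ θ
        * (bLow δ κ k₁ k₂ θ₂ θ - (κ-1)*θ))
  + (1 - ufn k₁ k₂ θ₂ θ) *
      (fL (bLow δ κ k₁ k₂ θ₂ θ) * b1fn δ κ k₁ k₂ θ₂ θ * (b1fn δ κ k₁ k₂ θ₂ θ - 2*(κ-1))
       + (bLow δ κ k₁ k₂ θ₂ θ - (κ-1)*θ) *
          (fL' (bLow δ κ k₁ k₂ θ₂ θ) * (b1fn δ κ k₁ k₂ θ₂ θ)^2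
           + fL (bLow δ κ k₁ k₂ θ₂ θ) * b2fn δ κ k₁ k₂ θ₂ θ))

lemma ufn_hasDeriv (k₁ k₂ θ₂ θ : ℝ) :
    HasDerivAt (ufn k₁ k₂ θ₂) (k₁ * ufn k₁ k₂ θ₂ θ) θ := by
  have h1 : HasDerivAt (fun θ : ℝ => -(k₁ * (θ₂ - θ))) k₁ θ := by
    simpa using (((hasDerivAt_id θ).const_sub θ₂).const_mul k₁).fun_neg
  have h2 := (h1.exp).const_mul (1 - k₂)
  refine h2.congr_deriv ?_
  simp only [ufn]; ring

lemma bLow_eq (δ κ k₁ k₂ θ₂ : ℝ) : (fun θ => bLow δ κ k₁ k₂ θ₂ θ)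
    = fun θ => δ*(κ-1)*((1 - ufn k₁ k₂ θ₂ θ)*θ + ufn k₁ k₂ θ₂ θ * θ₂) := by
  funext θ; simp only [bLow, etaLow, ufn]; ring

lemma bLow_hasDeriv (δ κ k₁ k₂ θ₂ θ : ℝ) :
    HasDerivAt (fun θ => bLow δ κ k₁ k₂ θ₂ θ) (b1fn δ κ k₁ k₂ θ₂ θ) θ := by
  rw [bLow_eq]
  have hu := ufn_hasDeriv k₁ k₂ θ₂ θ
  have h1 := ((hu.const_sub 1).mul (hasDerivAt_id θ)).add (hu.mul_const θ₂)
  have h2 := h1.const_mul (δ*(κ-1))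
  refine h2.congr_deriv ?_
  simp only [b1fn, id_eq]; ring

lemma b1fn_hasDeriv (δ κ k₁ k₂ θ₂ θ : ℝ) :
    HasDerivAt (b1fn δ κ k₁ k₂ θ₂) (b2fn δ κ k₁ k₂ θ₂ θ) θ := by
  have hu := ufn_hasDeriv k₁ k₂ θ₂ θ
  have h2 := (hu.const_mul k₁).mul ((hasDerivAt_id θ).const_sub θ₂)
  have h3 := ((hu.const_sub 1).add h2).const_mul (δ*(κ-1))
  refine h3.congr_deriv ?_
  simp only [b2fn, id_eq]; ring

lemma smaf {f : ℝ → ℝ} (hcont : ContinuousOn f (Set.Ioi 0)) {x : ℝ} (hx : 0 < x) :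
    StronglyMeasurableAtFilter f (nhds x) :=
  ⟨Set.Ioi 0, Ioi_mem_nhds hx, hcont.aestronglyMeasurable measurableSet_Ioi⟩

lemma cdf_hasDeriv (p₀ : ℝ) (fL : ℝ → ℝ) (hcont : ContinuousOn fL (Set.Ioi 0))
    (hfint : IntegrableOn fL (Set.Ioi 0)) {x : ℝ} (hx : 0 < x) :
    HasDerivAt (lossCdf p₀ fL) (fL x) x := by
  have hii : IntervalIntegrable fL volume 0 x := by
    rw [intervalIntegrable_iff_integrableOn_Ioc_of_le hx.le]
    exact hfint.mono_set Set.Ioc_subset_Ioi_self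
  have h := intervalIntegral.integral_hasDerivAt_right hii (smaf hcont hx)
    ((hcont x hx).continuousAt (Ioi_mem_nhds hx))
  exact h.const_add p₀

lemma split_Ioi {g : ℝ → ℝ} (hmint : IntegrableOn g (Set.Ioi 0)) {y : ℝ} (hy : 0 < y) :
    (∫ ℓ in Set.Ioc 0 y, g ℓ) + (∫ ℓ in Set.Ioi y, g ℓ) = ∫ ℓ in Set.Ioi (0:ℝ), g ℓ := by
  rw [← MeasureTheory.setIntegral_union (Set.Ioc_disjoint_Ioi le_rfl) measurableSet_Ioi
    (hmint.mono_set Set.Ioc_subset_Ioi_self) (hmint.mono_set (Set.Ioi_subset_Ioi hy.le))]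
  rw [Set.Ioc_union_Ioi_eq_Ioi hy.le]

lemma tail_hasDeriv (fL : ℝ → ℝ) (hcont : ContinuousOn fL (Set.Ioi 0))
    (hmint : IntegrableOn (fun ℓ => ℓ * fL ℓ) (Set.Ioi 0)) {x : ℝ} (hx : 0 < x) :
    HasDerivAt (fun y => ∫ ℓ in Set.Ioi y, ℓ * fL ℓ) (-(x * fL x)) x := by
  set g : ℝ → ℝ := fun ℓ => ℓ * fL ℓ with hg
  have hgcont : ContinuousOn g (Set.Ioi 0) := continuousOn_id.mul hcont
  have hev : (fun y => ∫ ℓ in Set.Ioi y, g ℓ) =ᶠ[nhds x]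
      (fun y => (∫ ℓ in Set.Ioi (0:ℝ), g ℓ) - ∫ ℓ in (0:ℝ)..y, g ℓ) := by
    filter_upwards [Ioi_mem_nhds hx] with y hy
    have hsplit := split_Ioi hmint hy
    rw [intervalIntegral.integral_of_le (le_of_lt hy)]
    linarith
  have hii : IntervalIntegrable g volume 0 x := by
    rw [intervalIntegrable_iff_integrableOn_Ioc_of_le hx.le]
    exact hmint.mono_set Set.Ioc_subset_Ioi_self
  have h2 : HasDerivAt (fun y => (∫ ℓ in Set.Ioi (0:ℝ), g ℓ) - ∫ ℓ in (0:ℝ)..y, g ℓ)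
      (-(x * fL x)) x := by
    have h := intervalIntegral.integral_hasDerivAt_right hii (smaf hgcont hx)
      ((hgcont x hx).continuousAt (Ioi_mem_nhds hx))
    simpa using h.const_sub (∫ ℓ in Set.Ioi (0:ℝ), g ℓ)
  exact h2.congr_of_eventuallyEq hev

lemma JLow_hasDeriv (p₀ : ℝ) (fL : ℝ → ℝ) (δ κ k₁ k₂ θ₂ θ : ℝ)
    (hcont : ContinuousOn fL (Set.Ioi 0)) (hfint : IntegrableOn fL (Set.Ioi 0))
    (hmint : IntegrableOn (fun ℓ => ℓ * fL ℓ) (Set.Ioi 0))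
    (hb : 0 < bLow δ κ k₁ k₂ θ₂ θ) :
    HasDerivAt (JLow p₀ fL δ κ k₁ k₂ θ₂) (J1fn p₀ fL δ κ k₁ k₂ θ₂ θ) θ := by
  have hbd := bLow_hasDeriv δ κ k₁ k₂ θ₂ θ
  have hF := (cdf_hasDeriv p₀ fL hcont hfint hb).comp θ hbd
  have hT := (tail_hasDeriv fL hcont hmint hb).comp θ hbd
  have hu := ufn_hasDeriv k₁ k₂ θ₂ θ
  have hQd := hF.add ((hF.const_sub 1).const_mul κ)
  have hmain := ((hasDerivAt_id θ).mul hQd).sub hT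
  have h := (hu.const_sub 1).mul hmain
  refine h.congr_deriv ?_
  simp only [J1fn, Function.comp, id_eq, Pi.add_apply, Pi.mul_apply, Pi.sub_apply, Pi.neg_apply]
  ring

lemma J1fn_hasDeriv (p₀ : ℝ) (fL fL' : ℝ → ℝ) (δ κ k₁ k₂ θ₂ θ : ℝ)
    (hcont : ContinuousOn fL (Set.Ioi 0)) (hfint : IntegrableOn fL (Set.Ioi 0))
    (hmint : IntegrableOn (fun ℓ => ℓ * fL ℓ) (Set.Ioi 0))
    (hfd : ∀ x : ℝ, 0 < x → HasDerivAt fL (fL' x) x)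
    (hb : 0 < bLow δ κ k₁ k₂ θ₂ θ) :
    HasDerivAt (J1fn p₀ fL δ κ k₁ k₂ θ₂) (J2fn p₀ fL fL' δ κ k₁ k₂ θ₂ θ) θ := by
  have hbd := bLow_hasDeriv δ κ k₁ k₂ θ₂ θ
  have hF := (cdf_hasDeriv p₀ fL hcont hfint hb).comp θ hbd
  have hT := (tail_hasDeriv fL hcont hmint hb).comp θ hbd
  have hu := ufn_hasDeriv k₁ k₂ θ₂ θ
  have hfb := (hfd _ hb).comp θ hbd
  have hb1 := b1fn_hasDeriv δ κ k₁ k₂ θ₂ θ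
  have hQd := hF.add ((hF.const_sub 1).const_mul κ)
  have hmain := ((hasDerivAt_id θ).mul hQd).sub hT
  have h1 := ((hu.const_mul k₁).neg).mul hmain
  have hfb1 := hfb.mul hb1
  have h2a := (hasDerivAt_id θ).mul (hfb1.const_mul (1-κ))
  have h2b := (hbd.mul hfb).mul hb1
  have h2 := (hu.const_sub 1).mul ((hQd.add h2a).add h2b)
  have h := h1.add h2
  refine h.congr_deriv ?_
  simp only [J2fn, Function.comp, id_eq, b2fn, b1fn, Pi.add_apply, Pi.mul_apply, Pi.sub_apply, Pi.neg_apply]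
  ring

lemma Ioc_mul_int_pos (fL : ℝ → ℝ) (hfpos : ∀ ℓ : ℝ, 0 < ℓ → 0 < fL ℓ)
    (hmint : IntegrableOn (fun ℓ => ℓ * fL ℓ) (Set.Ioi 0)) {y : ℝ} (hy : 0 < y) :
    0 < ∫ ℓ in Set.Ioc 0 y, ℓ * fL ℓ := by
  have hsplit : Set.Ioc 0 (y/2) ∪ Set.Ioc (y/2) y = Set.Ioc 0 y :=
    Set.Ioc_union_Ioc_eq_Ioc (by linarith) (by linarith)
  have hdisj : Disjoint (Set.Ioc 0 (y/2)) (Set.Ioc (y/2) y) := Set.Ioc_disjoint_Ioc_of_le le_rfl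
  have hint1 : IntegrableOn (fun ℓ => ℓ * fL ℓ) (Set.Ioc 0 (y/2)) :=
    hmint.mono_set Set.Ioc_subset_Ioi_self
  have hint2 : IntegrableOn (fun ℓ => ℓ * fL ℓ) (Set.Ioc (y/2) y) :=
    hmint.mono_set (fun x hx => lt_trans (by linarith) hx.1)
  have heq : (∫ ℓ in Set.Ioc 0 y, ℓ * fL ℓ)
      = (∫ ℓ in Set.Ioc 0 (y/2), ℓ * fL ℓ) + (∫ ℓ in Set.Ioc (y/2) y, ℓ * fL ℓ) := by
    rw [← hsplit, MeasureTheory.setIntegral_union hdisj measurableSet_Ioc hint1 hint2]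
  have h1 : 0 ≤ ∫ ℓ in Set.Ioc 0 (y/2), ℓ * fL ℓ :=
    setIntegral_nonneg measurableSet_Ioc
      (fun x hx => mul_nonneg hx.1.le (hfpos x hx.1).le)
  have h2 : 0 < ∫ ℓ in Set.Ioc (y/2) y, ℓ * fL ℓ := by
    rw [← intervalIntegral.integral_of_le (by linarith : y/2 ≤ y)]
    apply intervalIntegral.intervalIntegral_pos_of_pos_on
    · rw [intervalIntegrable_iff_integrableOn_Ioc_of_le (by linarith : y/2 ≤ y)]
      exact hint2
    · intro x hx
      exact mul_pos (by linarith [hx.1] : (0:ℝ) < x) (hfpos x (by linarith [hx.1]))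
    · linarith
  linarith

lemma cdf_le_one (p₀ : ℝ) (fL : ℝ → ℝ) (hfpos : ∀ ℓ : ℝ, 0 < ℓ → 0 < fL ℓ)
    (hfint : IntegrableOn fL (Set.Ioi 0))
    (hftot : ∫ ℓ in Set.Ioi (0:ℝ), fL ℓ = 1 - p₀) {y : ℝ} (hy : 0 < y) :
    lossCdf p₀ fL y ≤ 1 := by
  have hmono : (∫ ℓ in Set.Ioc 0 y, fL ℓ) ≤ ∫ ℓ in Set.Ioi (0:ℝ), fL ℓ := by
    apply MeasureTheory.setIntegral_mono_set hfint
    · filter_upwards [ae_restrict_mem measurableSet_Ioi] with x hx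
      exact (hfpos x hx).le
    · exact HasSubset.Subset.eventuallyLE Set.Ioc_subset_Ioi_self
  rw [lossCdf, intervalIntegral.integral_of_le hy.le]
  rw [hftot] at hmono
  linarith

/-- Lemma A.1: on `[μ, θ₂]`, every stationary point of the smooth branch
`J̃¹` of Company 1's profit is a strict local maximum. -/
theorem stmt_10 (p₀ δ κ M k₁ k₂ μ : ℝ) (fL fL' fL'' : ℝ → ℝ) (θ₂ : ℝ)
    (hp₀ : p₀ ∈ Set.Ioo (0:ℝ) 1) (hδ : δ ∈ Set.Ioo (0:ℝ) 1)
    (hκ : κ ∈ Set.Ioo (1:ℝ) 2)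
    (hk₁ : k₁ ∈ Set.Ioo (0:ℝ) 1) (hk₂ : k₂ ∈ Set.Ioo (0:ℝ) 1)
    (hfpos : ∀ ℓ : ℝ, 0 < ℓ → 0 < fL ℓ)
    (hfd : ∀ ℓ : ℝ, 0 < ℓ → HasDerivAt fL (fL' ℓ) ℓ)
    (hfd2 : ∀ ℓ : ℝ, 0 < ℓ → HasDerivAt fL' (fL'' ℓ) ℓ)
    (hfd2_cont : ContinuousOn fL'' (Set.Ioi 0))
    (hfint : IntegrableOn fL (Set.Ioi 0))
    (hftot : ∫ ℓ in Set.Ioi (0:ℝ), fL ℓ = 1 - p₀)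
    (hmint : IntegrableOn (fun ℓ => ℓ * fL ℓ) (Set.Ioi 0))
    (hμ : μ = ∫ ℓ in Set.Ioi (0:ℝ), ℓ * fL ℓ) (hμpos : 0 < μ) (hM : κ * μ ≤ M)
    (hθ₂ : θ₂ ∈ Theta μ M κ)
    (hcond1 : ∀ ℓ ∈ IL δ κ μ M,
      -(Real.exp 1 * k₁) / (2 * Real.exp 1 - 1) ≤ fL' ℓ / fL ℓ ∧
        fL' ℓ / fL ℓ ≤ k₁ / 2)
    (hcond2 : (1 - δ) * k₁ * M / κ ≤ A1 δ k₂) :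
    ∀ θ₁ ∈ Set.Icc μ θ₂,
      deriv (JLow p₀ fL δ κ k₁ k₂ θ₂) θ₁ = 0 →
      deriv (deriv (JLow p₀ fL δ κ k₁ k₂ θ₂)) θ₁ < 0 := by
  obtain ⟨hp₀0, hp₀1⟩ := hp₀
  obtain ⟨hδ0, hδ1⟩ := hδ
  obtain ⟨hκ1, hκ2⟩ := hκ
  obtain ⟨hk₁0, hk₁1⟩ := hk₁
  obtain ⟨hk₂0, hk₂1⟩ := hk₂
  obtain ⟨hθ₂lo, hθ₂hi⟩ := hθ₂
  intro θ₁ hθ₁ hstat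
  obtain ⟨hθ₁lo, hθ₁hi⟩ := hθ₁
  have hθ₁pos : 0 < θ₁ := lt_of_lt_of_le hμpos hθ₁lo
  have hκ1' : (0:ℝ) < κ - 1 := by linarith
  have hcont : ContinuousOn fL (Set.Ioi 0) :=
    fun x hx => ((hfd x hx).continuousAt).continuousWithinAt
  have hbeq : bLow δ κ k₁ k₂ θ₂ θ₁
      = δ*(κ-1)*((1 - ufn k₁ k₂ θ₂ θ₁)*θ₁ + ufn k₁ k₂ θ₂ θ₁ * θ₂) := by
    simp only [bLow, etaLow, ufn]; ring
  have hE0 : 0 < Real.exp (-(k₁*(θ₂-θ₁))) := Real.exp_pos _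
  have hE1 : Real.exp (-(k₁*(θ₂-θ₁))) ≤ 1 := by
    have h := Real.exp_le_exp.2 (show -(k₁*(θ₂-θ₁)) ≤ 0 by
      linarith only [mul_nonneg hk₁0.le (show (0:ℝ) ≤ θ₂ - θ₁ by linarith)])
    simpa [Real.exp_zero] using h
  have hu0 : 0 < ufn k₁ k₂ θ₂ θ₁ := by
    simp only [ufn]; exact mul_pos (by linarith) hE0
  have hu1 : ufn k₁ k₂ θ₂ θ₁ ≤ 1 - k₂ := by
    simp only [ufn]; exact mul_le_of_le_one_right (by linarith) hE1
  have hblo : δ*(κ-1)*θ₁ ≤ bLow δ κ k₁ k₂ θ₂ θ₁ := by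
    rw [hbeq]
    have h1 : θ₁ ≤ (1 - ufn k₁ k₂ θ₂ θ₁)*θ₁ + ufn k₁ k₂ θ₂ θ₁ * θ₂ := by
      linarith only [mul_nonneg hu0.le (show (0:ℝ) ≤ θ₂ - θ₁ by linarith)]
    exact mul_le_mul_of_nonneg_left h1 (mul_nonneg hδ0.le hκ1'.le)
  have hbhi : bLow δ κ k₁ k₂ θ₂ θ₁ ≤ δ*(κ-1)*θ₂ := by
    rw [hbeq]
    have h1 : (1 - ufn k₁ k₂ θ₂ θ₁)*θ₁ + ufn k₁ k₂ θ₂ θ₁ * θ₂ ≤ θ₂ := by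
      linarith only [mul_nonneg (show (0:ℝ) ≤ 1 - ufn k₁ k₂ θ₂ θ₁ by linarith only [hu1, hk₂0])
        (show (0:ℝ) ≤ θ₂ - θ₁ by linarith only [hθ₁hi])]
    exact mul_le_mul_of_nonneg_left h1 (mul_nonneg hδ0.le hκ1'.le)
  have hbpos : 0 < bLow δ κ k₁ k₂ θ₂ θ₁ :=
    lt_of_lt_of_le (mul_pos (mul_pos hδ0 hκ1') hθ₁pos) hblo
  have hIL : bLow δ κ k₁ k₂ θ₂ θ₁ ∈ IL δ κ μ M := by
    constructor
    · exact le_trans (mul_le_mul_of_nonneg_left hθ₁lo (mul_nonneg hδ0.le hκ1'.le)) hblo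
    · exact le_trans hbhi (mul_le_mul_of_nonneg_left hθ₂hi (mul_nonneg hδ0.le hκ1'.le))
  obtain ⟨hflo, hfhi⟩ := hcond1 _ hIL
  have hfposb : 0 < fL (bLow δ κ k₁ k₂ θ₂ θ₁) := hfpos _ hbpos
  have hfp1 : fL' (bLow δ κ k₁ k₂ θ₂ θ₁) ≤ k₁/2 * fL (bLow δ κ k₁ k₂ θ₂ θ₁) :=
    (div_le_iff₀ hfposb).1 hfhi |>.trans_eq (by ring)
  have h2e : (0:ℝ) < 2*Real.exp 1 - 1 := by linarith only [Real.exp_one_gt_d9]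
  have hfp2 : -(614/1000*k₁*fL (bLow δ κ k₁ k₂ θ₂ θ₁)) ≤ fL' (bLow δ κ k₁ k₂ θ₂ θ₁) := by
    have hlo2 := (le_div_iff₀ hfposb).1 hflo
    have h3 : Real.exp 1/(2*Real.exp 1 - 1) ≤ 614/1000 := by
      rw [div_le_iff₀ h2e]; linarith only [Real.exp_one_gt_d9]
    have h4 := mul_le_mul_of_nonneg_right h3
      (mul_nonneg hk₁0.le hfposb.le : (0:ℝ) ≤ k₁ * fL (bLow δ κ k₁ k₂ θ₂ θ₁))
    have h5 : -(Real.exp 1 * k₁)/(2*Real.exp 1 - 1) * fL (bLow δ κ k₁ k₂ θ₂ θ₁)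
        = -(Real.exp 1/(2*Real.exp 1 - 1) * (k₁ * fL (bLow δ κ k₁ k₂ θ₂ θ₁))) := by
      ring
    rw [h5] at hlo2
    linarith
  have hUopen : IsOpen {θ : ℝ | 0 < bLow δ κ k₁ k₂ θ₂ θ} := by
    have hcb : Continuous (fun θ => bLow δ κ k₁ k₂ θ₂ θ) :=
      continuous_iff_continuousAt.2 (fun θ => (bLow_hasDeriv δ κ k₁ k₂ θ₂ θ).continuousAt)
    exact isOpen_lt continuous_const hcb
  have hmem : {θ : ℝ | 0 < bLow δ κ k₁ k₂ θ₂ θ} ∈ nhds θ₁ := hUopen.mem_nhds hbpos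
  have hev : deriv (JLow p₀ fL δ κ k₁ k₂ θ₂) =ᶠ[nhds θ₁] J1fn p₀ fL δ κ k₁ k₂ θ₂ := by
    filter_upwards [hmem] with θ hθ
    exact (JLow_hasDeriv p₀ fL δ κ k₁ k₂ θ₂ θ hcont hfint hmint hθ).deriv
  have hstat1 : J1fn p₀ fL δ κ k₁ k₂ θ₂ θ₁ = 0 := by
    rw [← (JLow_hasDeriv p₀ fL δ κ k₁ k₂ θ₂ θ₁ hcont hfint hmint hbpos).deriv]
    exact hstat
  have hd2 : deriv (deriv (JLow p₀ fL δ κ k₁ k₂ θ₂)) θ₁ = J2fn p₀ fL fL' δ κ k₁ k₂ θ₂ θ₁ := by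
    rw [Filter.EventuallyEq.deriv_eq hev]
    exact (J1fn_hasDeriv p₀ fL fL' δ κ k₁ k₂ θ₂ θ₁ hcont hfint hmint hfd hbpos).deriv
  rw [hd2]
  have hmlt : (∫ ℓ in Set.Ioi (bLow δ κ k₁ k₂ θ₂ θ₁), ℓ * fL ℓ) < θ₁ := by
    have hsp := split_Ioi hmint hbpos
    have hpos := Ioc_mul_int_pos fL hfpos hmint hbpos
    rw [← hμ] at hsp
    linarith
  have ha1 : lossCdf p₀ fL (bLow δ κ k₁ k₂ θ₂ θ₁) ≤ 1 :=
    cdf_le_one p₀ fL hfpos hfint hftot hbpos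
  have hED := exp_neg_mul_le (mul_nonneg hk₁0.le (show (0:ℝ) ≤ θ₂-θ₁ by linarith))
  have hA1' : (1-δ)*k₁*θ₁*(2-k₂) ≤ k₂*(2-δ*k₂) := by
    have hθMκ : θ₁ ≤ M/κ := le_trans hθ₁hi hθ₂hi
    have h1 : (1-δ)*k₁*θ₁ ≤ (1-δ)*k₁*(M/κ) :=
      mul_le_mul_of_nonneg_left hθMκ (mul_nonneg (by linarith) hk₁0.le)
    have h2 : (1-δ)*k₁*(M/κ) = (1-δ)*k₁*M/κ := by ring
    have h3 : (1-δ)*k₁*θ₁ ≤ k₂*(2-δ*k₂)/(2-k₂) := by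
      rw [h2] at h1
      calc (1-δ)*k₁*θ₁ ≤ (1-δ)*k₁*M/κ := h1
      _ ≤ A1 δ k₂ := hcond2
      _ = k₂*(2-δ*k₂)/(2-k₂) := by rw [A1]
    exact (le_div_iff₀ (show (0:ℝ) < 2-k₂ by linarith)).1 h3
  exact key_ineq δ κ k₁ k₂ θ₁ (Real.exp (-(k₁*(θ₂-θ₁)))) (k₁*(θ₂-θ₁))
    (ufn k₁ k₂ θ₂ θ₁) (δ*(κ-1)) (b1fn δ κ k₁ k₂ θ₂ θ₁) (b2fn δ κ k₁ k₂ θ₂ θ₁)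
    (fL (bLow δ κ k₁ k₂ θ₂ θ₁)) (fL' (bLow δ κ k₁ k₂ θ₂ θ₁))
    (lossCdf p₀ fL (bLow δ κ k₁ k₂ θ₂ θ₁))
    (∫ ℓ in Set.Ioi (bLow δ κ k₁ k₂ θ₂ θ₁), ℓ * fL ℓ)
    (lossCdf p₀ fL (bLow δ κ k₁ k₂ θ₂ θ₁)
      + κ*(1 - lossCdf p₀ fL (bLow δ κ k₁ k₂ θ₂ θ₁)))
    (bLow δ κ k₁ k₂ θ₂ θ₁ - (κ-1)*θ₁)
    (θ₁*(lossCdf p₀ fL (bLow δ κ k₁ k₂ θ₂ θ₁)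
      + κ*(1 - lossCdf p₀ fL (bLow δ κ k₁ k₂ θ₂ θ₁)))
      - ∫ ℓ in Set.Ioi (bLow δ κ k₁ k₂ θ₂ θ₁), ℓ * fL ℓ)
    (J2fn p₀ fL fL' δ κ k₁ k₂ θ₂ θ₁)
    hδ0 hδ1 hκ1 hκ2 hk₁0 hk₂0 hk₂1 hθ₁pos hE0 hE1
    (mul_nonneg hk₁0.le (by linarith)) hED hfposb hfp1 hfp2 ha1 hmlt
    rfl rfl
    (by simp only [b1fn]; try ring)
    (by simp only [b2fn]; try ring)
    rfl rfl
    (by linarith only [hblo])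
    hA1'
    (by simp only [J1fn] at hstat1; linear_combination hstat1)
    (by simp only [J2fn]; try ring)

end
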